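/- arXiv:math/0406162 — 5 statements merged into one kernel-verified Lean document; each statement's English description precedes it below -/
import Mathlib

section
/- Let P and L be finite types with an incidence relation forming a projective plane (every two distinct points lie on a unique common line, every two distinct lines meet in a unique point, and there exists a nondegenerate configuration). Suppose T : P → L is a bijection such that (1) for all x, x is not incident to T x, and (2) for all distinct x₁ x₂, the point of intersection of T x₁ and T x₂ does not lie on the line through x₁ and x₂. Then for every line y, the map sending each point x incident to y to the intersection point of T x with y is a well-defined bijection from {x : P // x is incident to y} to itself. -/
open Configuration

variable {P L : Type*} [Membership P L] [Fintype P] [Fintype L]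
  [Configuration.ProjectivePlane P L]

/-- Condition (2) on `T`: for distinct points `x₁ x₂`, any common point of the
lines `T x₁` and `T x₂` does not lie on any line through `x₁` and `x₂`. -/
def Cond2 (T : P → L) : Prop :=
  ∀ x₁ x₂ : P, x₁ ≠ x₂ → ∀ p : P, p ∈ T x₁ → p ∈ T x₂ →
    ∀ ℓ : L, x₁ ∈ ℓ → x₂ ∈ ℓ → p ∉ ℓ

/-- The set `K` of triples `(a, b, c)` with `a ∈ T c`, `b ∈ T a`, `b ∈ T c`. -/
def Kset (T : P → L) : Set (P × P × P) :=
  {t | t.1 ∈ T t.2.2 ∧ t.2.1 ∈ T t.1 ∧ t.2.1 ∈ T t.2.2}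

/-- For every line `y`, the map sending a point `x` of `y` to the intersection
point of `T x` with `y` is a well-defined bijection of the points of `y`. -/
theorem stmt0 (T : P → L) (hT : Function.Bijective T)
    (h1 : ∀ x : P, x ∉ T x) (h2 : Cond2 T) (y : L) :
    ∃ f : {x : P // x ∈ y} → {x : P // x ∈ y},
      Function.Bijective f ∧ ∀ x : {x : P // x ∈ y}, (f x : P) ∈ T (x : P) := by
  have hne : ∀ x : {x : P // x ∈ y}, T (x : P) ≠ y := fun x h =>
    h1 x (by rw [h]; exact x.2)
  refine ⟨fun x => ⟨HasPoints.mkPoint (hne x), (HasPoints.mkPoint_ax (hne x)).2⟩,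
    ?_, fun x => (HasPoints.mkPoint_ax (hne x)).1⟩
  rw [← Finite.injective_iff_bijective]
  intro x₁ x₂ hfx
  by_contra hxx
  have hne12 : (x₁ : P) ≠ (x₂ : P) := fun h => hxx (Subtype.ext h)
  have heq : HasPoints.mkPoint (hne x₁) = HasPoints.mkPoint (hne x₂) :=
    Subtype.ext_iff.mp hfx
  exact h2 x₁ x₂ hne12 (HasPoints.mkPoint (hne x₁))
    (HasPoints.mkPoint_ax (hne x₁)).1
    (heq ▸ (HasPoints.mkPoint_ax (hne x₂)).1)
    y x₁.2 x₂.2 (HasPoints.mkPoint_ax (hne x₁)).2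
end

section
/- With P, L, T, K as above, for every pair (xᵢ, xⱼ) with xⱼ incident to T xᵢ, there exists a unique x_k such that (xᵢ, xⱼ, x_k) ∈ K. -/
open Configuration

variable {P L : Type*} [Membership P L] [Fintype P] [Fintype L]
  [Configuration.ProjectivePlane P L]

/-- Every pair `(a, b)` with `b ∈ T a` extends to a unique triple `(a, b, c) ∈ K`. -/
theorem stmt2 (T : P → L) (hT : Function.Bijective T)
    (h1 : ∀ x : P, x ∉ T x) (h2 : Cond2 T) :
    ∀ a b : P, b ∈ T a → ∃! c : P, (a, b, c) ∈ Kset T := by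
  intro a b hb
  have hab : a ≠ b := fun h => h1 a (h ▸ hb)
  obtain ⟨c, hc⟩ := hT.surjective (HasLines.mkLine hab)
  refine ⟨c, ⟨?_, hb, ?_⟩, ?_⟩
  · rw [hc]; exact (HasLines.mkLine_ax hab).1
  · rw [hc]; exact (HasLines.mkLine_ax hab).2
  · rintro c' ⟨ha', _, hb'⟩
    apply hT.injective
    rw [hc]
    rcases Nondegenerate.eq_or_eq ha' hb' (HasLines.mkLine_ax hab).1
      (HasLines.mkLine_ax hab).2 with h | h
    · exact absurd h hab
    · exact h
end

section
/- With P, L, T, K as above, for every pair (xⱼ, x_k) with xⱼ incident to T x_k, there exists a unique xᵢ such that (xᵢ, xⱼ, x_k) ∈ K. -/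
open Configuration

variable {P L : Type*} [Membership P L] [Fintype P] [Fintype L]
  [Configuration.ProjectivePlane P L]

/-- Every pair `(b, c)` with `b ∈ T c` extends to a unique triple `(a, b, c) ∈ K`. -/
theorem stmt3 (T : P → L) (hT : Function.Bijective T)
    (h1 : ∀ x : P, x ∉ T x) (h2 : Cond2 T) :
    ∀ b c : P, b ∈ T c → ∃! a : P, (a, b, c) ∈ Kset T := by
  intro b c hbc
  -- for any x on T c, T x ≠ T c
  have hne : ∀ x : P, x ∈ T c → T x ≠ T c := by
    intro x hx h
    exact h1 x (h ▸ hx)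
  -- the map T* on points of T c
  let f : {x : P // x ∈ T c} → {x : P // x ∈ T c} := fun x =>
    ⟨HasPoints.mkPoint (hne x.1 x.2), (HasPoints.mkPoint_ax (hne x.1 x.2)).2⟩
  have hf1 : ∀ x : {x : P // x ∈ T c}, (f x : P) ∈ T x.1 := fun x =>
    (HasPoints.mkPoint_ax (hne x.1 x.2)).1
  have hinj : Function.Injective f := by
    intro x₁ x₂ hfx
    by_contra hxx
    have hxx' : x₁.1 ≠ x₂.1 := fun h => hxx (Subtype.ext h)
    have h₁ : (f x₁ : P) ∈ T x₁.1 := hf1 x₁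
    have h₂ : (f x₁ : P) ∈ T x₂.1 := hfx ▸ hf1 x₂
    exact h2 x₁.1 x₂.1 hxx' (f x₁ : P) h₁ h₂ (T c) x₁.2 x₂.2 (f x₁).2
  have hsurj : Function.Surjective f := Finite.surjective_of_injective hinj
  obtain ⟨a, ha⟩ := hsurj ⟨b, hbc⟩
  refine ⟨a.1, ⟨a.2, ?_, hbc⟩, ?_⟩
  · have := hf1 a
    rw [ha] at this
    exact this
  · rintro a' ⟨ha'c, hba', -⟩
    by_contra hne'
    have hba : b ∈ T a.1 := by have := hf1 a; rwa [ha] at this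
    exact h2 a' a.1 hne' b hba' hba (T c) ha'c a.2 hbc
end

section
/- If (a,b,c) ∈ K and (a,b',c) ∈ K then b = b'; if (a,b,c) ∈ K and (a,b,c') ∈ K then c = c'; if (a,b,c) ∈ K and (a',b,c) ∈ K then a = a'. (Each pair of coordinates determines the triple uniquely.) -/
open Configuration

variable {P L : Type*} [Membership P L] [Fintype P] [Fintype L]
  [Configuration.ProjectivePlane P L]

/-- Each pair of coordinates of a triple in `K` determines the third uniquely. -/
theorem stmt4 (T : P → L) (hT : Function.Bijective T)
    (h1 : ∀ x : P, x ∉ T x) (h2 : Cond2 T) :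
    (∀ a b b' c : P, (a, b, c) ∈ Kset T → (a, b', c) ∈ Kset T → b = b') ∧
    (∀ a b c c' : P, (a, b, c) ∈ Kset T → (a, b, c') ∈ Kset T → c = c') ∧
    (∀ a a' b c : P, (a, b, c) ∈ Kset T → (a', b, c) ∈ Kset T → a = a') := by
  refine ⟨?_, ?_, ?_⟩
  · rintro a b b' c ⟨hac, hba, hbc⟩ ⟨-, hb'a, hb'c⟩
    rcases Nondegenerate.eq_or_eq hba hb'a hbc hb'c with h | h
    · exact h
    · have hac' : a ∈ T c := hac
      rw [show a = c from hT.1 h] at hac'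
      exact absurd hac' (h1 c)
  · rintro a b c c' ⟨hac, hba, hbc⟩ ⟨hac', -, hbc'⟩
    rcases Nondegenerate.eq_or_eq hac hbc hac' hbc' with h | h
    · have hba' : b ∈ T a := hba
      rw [← show a = b from h] at hba'
      exact absurd hba' (h1 a)
    · exact hT.1 h
  · rintro a a' b c ⟨hac, hba, hbc⟩ ⟨ha'c, hba', -⟩
    by_contra hne
    exact h2 a a' hne b hba hba' (T c) hac ha'c hbc
end

section
/- With notation as above, for each c ∈ P, the number of pairs (a,b) with (a,b,c) ∈ K equals q+1, and for each b ∈ P, the number of pairs (a,c) with (a,b,c) ∈ K equals q+1. -/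
open Configuration

variable {P L : Type*} [Membership P L] [Fintype P] [Fintype L]
  [Configuration.ProjectivePlane P L]

/-- For each point `c` (resp. `b`) there are exactly `q + 1` triples in `K`
with third (resp. second) coordinate `c` (resp. `b`). -/
theorem stmt12 (T : P → L) (hT : Function.Bijective T)
    (h1 : ∀ x : P, x ∉ T x) (h2 : Cond2 T) (q : ℕ)
    (hq : ∀ l : L, pointCount P l = q + 1) :
    (∀ c : P, Nat.card {ab : P × P // (ab.1, ab.2, c) ∈ Kset T} = q + 1) ∧
    (∀ b : P, Nat.card {ac : P × P // (ac.1, b, ac.2) ∈ Kset T} = q + 1) := by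
  classical
  let e := Equiv.ofBijective T hT
  constructor
  · intro c
    have hne : ∀ a : P, a ∈ T c → T a ≠ T c := by
      intro a ha hEq
      exact h1 a (hEq ▸ ha)
    let φ : {ab : P × P // (ab.1, ab.2, c) ∈ Kset T} ≃ {a : P // a ∈ T c} :=
      { toFun := fun x => ⟨x.1.1, x.2.1⟩
        invFun := fun a => ⟨(a.1, HasPoints.mkPoint (hne a.1 a.2)),
          a.2, (HasPoints.mkPoint_ax (hne a.1 a.2)).1, (HasPoints.mkPoint_ax (hne a.1 a.2)).2⟩
        left_inv := by
          rintro ⟨⟨a, b⟩, ha, hba, hbc⟩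
          ext
          · rfl
          · exact show HasPoints.mkPoint (hne a ha) = b from
              (Nondegenerate.eq_or_eq (HasPoints.mkPoint_ax (hne a ha)).1 hba
              (HasPoints.mkPoint_ax (hne a ha)).2 hbc).resolve_right (hne a ha)
        right_inv := fun a => rfl }
    rw [Nat.card_congr φ]
    exact hq (T c)
  · intro b
    have hab : ∀ a : P, b ∈ T a → a ≠ b := by
      intro a ha hEq
      exact h1 a (hEq ▸ ha)
    let φ : {ac : P × P // (ac.1, b, ac.2) ∈ Kset T} ≃ {a : P // b ∈ T a} :=
      { toFun := fun x => ⟨x.1.1, x.2.2.1⟩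
        invFun := fun a => ⟨(a.1, e.symm (HasLines.mkLine (hab a.1 a.2))),
          by
            have h : T (e.symm (HasLines.mkLine (hab a.1 a.2))) = HasLines.mkLine (hab a.1 a.2) := by
              rw [show T _ = e _ from (Equiv.ofBijective_apply T hT _).symm, e.apply_symm_apply]
            refine ⟨?_, a.2, ?_⟩ <;> rw [show T (e.symm (HasLines.mkLine (hab a.1 a.2))) =
              HasLines.mkLine (hab a.1 a.2) from h]
            · exact (HasLines.mkLine_ax (hab a.1 a.2)).1
            · exact (HasLines.mkLine_ax (hab a.1 a.2)).2⟩
        left_inv := by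
          rintro ⟨⟨a, c⟩, hac, hba, hbc⟩
          ext
          · rfl
          · show e.symm (HasLines.mkLine (hab a hba)) = c
            have : HasLines.mkLine (hab a hba) = T c :=
              (Nondegenerate.eq_or_eq (HasLines.mkLine_ax (hab a hba)).1
                (HasLines.mkLine_ax (hab a hba)).2 hac hbc).resolve_left (hab a hba)
            rw [this, (Equiv.ofBijective_apply T hT c).symm]
            exact e.symm_apply_apply c
        right_inv := fun a => rfl }
    have ψ : {a : P // b ∈ T a} ≃ {l : L // b ∈ l} :=
      e.subtypeEquiv (fun a => by rw [Equiv.ofBijective_apply T hT a])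
    rw [Nat.card_congr (φ.trans ψ)]
    have := ProjectivePlane.lineCount_eq_pointCount b (T b)
    rw [lineCount] at this
    rw [this, hq]
end
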